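/- Let z₀ ∈ ℂ and let γ : [0,2] → ℂ be a continuous curve with γ(t) ≠ z₀ for all t. Suppose that sup_{0≤t≤1} |γ(t+1) − γ(t)| ≤ inf_{0≤s≤2} |γ(s) − z₀|. Then for every continuous function h : [0,2] → ℝ satisfying γ(t) − z₀ = |γ(t) − z₀|·exp(i·h(t)) for all t ∈ [0,2], there exists an integer k such that |h(2) − h(0) − 4πk| ≤ 2π/3. -/

import Mathlib

open Real



lemma aux_cos_ge (r₁ r₂ a b : ℝ) (h₁ : 0 < r₁) (h₂ : 0 < r₂)
    (hle : ‖(r₁:ℂ) * Complex.exp ((a:ℂ) * Complex.I)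
        - (r₂:ℂ) * Complex.exp ((b:ℂ) * Complex.I)‖ ^ 2 ≤ r₁ * r₂) :
    1/2 ≤ Real.cos (a - b) := by
  rw [Complex.sq_norm, Complex.normSq_apply] at hle
  simp only [Complex.sub_re, Complex.sub_im, Complex.mul_re, Complex.mul_im,
    Complex.ofReal_re, Complex.ofReal_im,
    Complex.exp_ofReal_mul_I_re, Complex.exp_ofReal_mul_I_im] at hle
  rw [Real.cos_sub]
  by_contra hc
  push_neg at hc
  have hs := Real.sin_sq_add_cos_sq a
  have hs' := Real.sin_sq_add_cos_sq b
  have h3 := mul_lt_mul_of_pos_left hc (mul_pos h₁ h₂)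
  have e : (r₁ * cos a - 0 * sin a - (r₂ * cos b - 0 * sin b)) *
        (r₁ * cos a - 0 * sin a - (r₂ * cos b - 0 * sin b)) +
      (r₁ * sin a + 0 * cos a - (r₂ * sin b + 0 * cos b)) *
        (r₁ * sin a + 0 * cos a - (r₂ * sin b + 0 * cos b)) =
      r₁^2 * (sin a^2 + cos a^2) + r₂^2 * (sin b^2 + cos b^2)
        - 2 * (r₁ * r₂ * (cos a * cos b + sin a * sin b)) := by ring
  rw [e, hs, hs'] at hle
  nlinarith [sq_nonneg (r₁ - r₂)]

lemma aux_near_mul (θ : ℝ) (hc : 1/2 ≤ Real.cos θ) :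
    ∃ k : ℤ, |θ - 2 * π * k| ≤ π / 3 := by
  have hπ := Real.pi_pos
  refine ⟨round (θ / (2 * π)), ?_⟩
  set k : ℤ := round (θ / (2 * π)) with hk
  have h1 : |θ / (2 * π) - (k:ℝ)| ≤ 1/2 := abs_sub_round (θ / (2 * π))
  have h2 : θ - 2 * π * k = (2 * π) * (θ / (2 * π) - k) := by field_simp
  have hb : |θ - 2 * π * k| ≤ π := by
    rw [h2, abs_mul, abs_of_pos (by linarith : (0:ℝ) < 2 * π)]
    nlinarith
  have hcos : Real.cos (θ - 2 * π * k) = Real.cos θ := by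
    have := Real.cos_sub_int_mul_two_pi θ k
    rw [← this]; ring_nf
  by_contra hlt
  push_neg at hlt
  have : Real.cos |θ - 2 * π * k| < Real.cos (π / 3) :=
    Real.cos_lt_cos_of_nonneg_of_le_pi (by positivity) hb hlt
  rw [Real.cos_abs, hcos, Real.cos_pi_div_three] at this
  linarith

lemma aux_half_far (m k : ℤ) : (1:ℝ)/2 ≤ |(m:ℝ) + 1/2 - k| := by
  rcases le_or_gt k m with hle | hlt
  · have : (k:ℝ) ≤ m := by exact_mod_cast hle
    rw [abs_of_nonneg (by linarith)]; linarith
  · have : (m:ℝ) + 1 ≤ k := by exact_mod_cast hlt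
    rw [abs_of_nonpos (by linarith)]; linarith

lemma aux_common_k (u : ℝ → ℝ) (hu : ContinuousOn u (Set.Icc 0 1))
    (hall : ∀ t ∈ Set.Icc (0:ℝ) 1, ∃ k : ℤ, |u t - k| ≤ 1/6) :
    ∃ k : ℤ, |u 0 - k| ≤ 1/6 ∧ |u 1 - k| ≤ 1/6 := by
  obtain ⟨k₀, hk₀⟩ := hall 0 (by norm_num)
  obtain ⟨k₁, hk₁⟩ := hall 1 (by norm_num)
  have habs₀ := abs_le.mp hk₀
  have habs₁ := abs_le.mp hk₁
  rcases lt_trichotomy k₀ k₁ with hlt | heq | hgt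
  · exfalso
    have hc : (k₀:ℝ) + 1 ≤ k₁ := by exact_mod_cast hlt
    have : ((k₀:ℝ) + 1/2) ∈ Set.Icc (u 0) (u 1) := ⟨by linarith, by linarith⟩
    obtain ⟨t, ht, hut⟩ := intermediate_value_Icc zero_le_one hu this
    obtain ⟨k, hk⟩ := hall t ht
    rw [hut] at hk
    have := aux_half_far k₀ k
    linarith
  · exact ⟨k₀, hk₀, heq ▸ hk₁⟩
  · exfalso
    have hc : (k₁:ℝ) + 1 ≤ k₀ := by exact_mod_cast hgt
    have : ((k₁:ℝ) + 1/2) ∈ Set.Icc (u 1) (u 0) := ⟨by linarith, by linarith⟩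
    obtain ⟨t, ht, hut⟩ := intermediate_value_Icc' zero_le_one hu this
    obtain ⟨k, hk⟩ := hall t ht
    rw [hut] at hk
    have := aux_half_far k₁ k
    linarith

/-- Let `z₀ ∈ ℂ` and `γ : [0,2] → ℂ` a continuous curve avoiding
`z₀`. If `sup_{0≤t≤1} |γ(t+1) − γ(t)| ≤ inf_{0≤s≤2} |γ(s) − z₀|`, then for every
continuous branch `h` of the argument of `γ − z₀`, the change of argument
`h(2) − h(0)` is within `2π/3` of an integer multiple of `4π`. -/
theorem change_of_argument_near_multiple_of_four_pi
    (z₀ : ℂ) (γ : ℝ → ℂ)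
    (hγ_cont : ContinuousOn γ (Set.Icc 0 2))
    (hγ_ne : ∀ t ∈ Set.Icc (0 : ℝ) 2, γ t ≠ z₀)
    (hclose : ∀ t ∈ Set.Icc (0 : ℝ) 1, ∀ s ∈ Set.Icc (0 : ℝ) 2,
      ‖γ (t + 1) - γ t‖ ≤ ‖γ s - z₀‖) :
    ∀ h : ℝ → ℝ, ContinuousOn h (Set.Icc 0 2) →
      (∀ t ∈ Set.Icc (0 : ℝ) 2,
        γ t - z₀ = (‖γ t - z₀‖ : ℂ) * Complex.exp ((h t : ℂ) * Complex.I)) →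
      ∃ k : ℤ, |h 2 - h 0 - 4 * π * k| ≤ 2 * π / 3 := by
  intro h hh_cont hbranch
  have hπ := Real.pi_pos
  -- membership helpers
  have hmem1 : ∀ t ∈ Set.Icc (0:ℝ) 1, t ∈ Set.Icc (0:ℝ) 2 := by
    intro t ht; exact ⟨ht.1, by linarith [ht.2]⟩
  have hmem2 : ∀ t ∈ Set.Icc (0:ℝ) 1, t + 1 ∈ Set.Icc (0:ℝ) 2 := by
    intro t ht; exact ⟨by linarith [ht.1], by linarith [ht.2]⟩
  -- the per-point bound
  have key : ∀ t ∈ Set.Icc (0:ℝ) 1,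
      ∃ k : ℤ, |(h (t+1) - h t) - 2 * π * k| ≤ π / 3 := by
    intro t ht
    have ht2 := hmem1 t ht
    have ht2' := hmem2 t ht
    set r₁ := ‖γ (t+1) - z₀‖ with hr₁
    set r₂ := ‖γ t - z₀‖ with hr₂
    have h₁ : 0 < r₁ := by
      rw [hr₁]; exact (norm_pos_iff.mpr (sub_ne_zero.mpr (hγ_ne _ ht2')))
    have h₂ : 0 < r₂ := by
      rw [hr₂]; exact (norm_pos_iff.mpr (sub_ne_zero.mpr (hγ_ne _ ht2)))
    have hrepr : (r₁:ℂ) * Complex.exp ((h (t+1) : ℂ) * Complex.I)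
        - (r₂:ℂ) * Complex.exp ((h t : ℂ) * Complex.I) = γ (t+1) - γ t := by
      rw [← hbranch _ ht2', ← hbranch _ ht2]; ring
    have hle : ‖(r₁:ℂ) * Complex.exp ((h (t+1) : ℂ) * Complex.I)
        - (r₂:ℂ) * Complex.exp ((h t : ℂ) * Complex.I)‖ ^ 2 ≤ r₁ * r₂ := by
      rw [hrepr, sq]
      exact mul_le_mul (hclose t ht _ ht2') (hclose t ht _ ht2)
        (norm_nonneg _) (le_of_lt h₁)
    have hcos := aux_cos_ge r₁ r₂ (h (t+1)) (h t) h₁ h₂ hle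
    exact aux_near_mul _ hcos
  -- pass to u = g / (2π)
  set u : ℝ → ℝ := fun t => (h (t+1) - h t) / (2 * π) with hu_def
  have hu_cont : ContinuousOn u (Set.Icc 0 1) := by
    apply ContinuousOn.div_const
    apply ContinuousOn.sub
    · exact (hh_cont.comp ((continuous_id.add continuous_const).continuousOn) hmem2)
    · exact hh_cont.mono (fun t ht => hmem1 t ht)
  have hall : ∀ t ∈ Set.Icc (0:ℝ) 1, ∃ k : ℤ, |u t - k| ≤ 1/6 := by
    intro t ht
    obtain ⟨k, hk⟩ := key t ht
    refine ⟨k, ?_⟩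
    have he : u t - k = ((h (t+1) - h t) - 2 * π * k) / (2 * π) := by
      rw [hu_def]; field_simp
    rw [he, abs_div, abs_of_pos (by linarith : (0:ℝ) < 2 * π), div_le_iff₀ (by linarith)]
    calc |(h (t+1) - h t) - 2 * π * k| ≤ π / 3 := hk
      _ = 1/6 * (2 * π) := by ring
  obtain ⟨k, hk0, hk1⟩ := aux_common_k u hu_cont hall
  refine ⟨k, ?_⟩
  have e0 : h (0+1) - h 0 - 2 * π * k = (u 0 - k) * (2 * π) := by
    rw [hu_def]; field_simp
  have e1 : h (1+1) - h 1 - 2 * π * k = (u 1 - k) * (2 * π) := by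
    rw [hu_def]; field_simp
  have b0 : |h (0+1) - h 0 - 2 * π * k| ≤ π / 3 := by
    rw [e0, abs_mul, abs_of_pos (by linarith : (0:ℝ) < 2 * π)]
    nlinarith
  have b1 : |h (1+1) - h 1 - 2 * π * k| ≤ π / 3 := by
    rw [e1, abs_mul, abs_of_pos (by linarith : (0:ℝ) < 2 * π)]
    nlinarith
  norm_num at b0 b1
  have e : h 2 - h 0 - 4 * π * k =
      (h 2 - h 1 - 2 * π * k) + (h 1 - h 0 - 2 * π * k) := by ring
  rw [e]
  calc |(h 2 - h 1 - 2 * π * k) + (h 1 - h 0 - 2 * π * k)|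
      ≤ |h 2 - h 1 - 2 * π * k| + |h 1 - h 0 - 2 * π * k| := abs_add_le _ _
    _ ≤ π / 3 + π / 3 := add_le_add b1 b0
    _ = 2 * π / 3 := by ring
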